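/- Let 𝒪 be an order ideal in P = K[x_0,…,x_n] and let G be a homogeneous ∂𝒪-prebasis. Then for every d ≥ 0 the residue classes of the terms of 𝒪_d generate the K-vector space P_d/(G)_d; equivalently, P_d = (G)_d + ⟨𝒪_d⟩ for every d ≥ 0. -/

import Mathlib

open MvPolynomial

namespace Border

/-- A term of `K[x_0, …, x_n]`, identified with its exponent vector. -/
abbrev Term (n : ℕ) := Fin (n + 1) →₀ ℕ

variable {n : ℕ}

/-- The (standard) degree of a term. -/
def tdeg (m : Term n) : ℕ := ∑ i, m i

/-- An order ideal: a nonempty set of terms closed under divisors. -/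
def IsOrderIdeal (O : Set (Term n)) : Prop :=
  O.Nonempty ∧ ∀ τ ∈ O, ∀ τ' : Term n, τ' ≤ τ → τ' ∈ O

/-- The border `∂𝒪 = (x_0·𝒪 ∪ ⋯ ∪ x_n·𝒪) ∖ 𝒪`. -/
def border (O : Set (Term n)) : Set (Term n) :=
  {σ | σ ∉ O ∧ ∃ r : Fin (n + 1), ∃ τ ∈ O, σ = τ + Finsupp.single r 1}

/-- Multiplicative set of a border term `σ`, with respect to a labeling `lab` of the border:
`𝒯_σ = {η : σ' ∤ η·σ for every border term σ' with a larger label}`. -/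
def mulSet (O : Set (Term n)) (lab : Term n → ℕ) (σ : Term n) : Set (Term n) :=
  {η | ∀ σ' ∈ border O, lab σ < lab σ' → ¬ σ' ≤ η + σ}

/-- The cone `C(σ) = {η·σ : η ∈ 𝒯_σ}`. -/
def cone (O : Set (Term n)) (lab : Term n → ℕ) (σ : Term n) : Set (Term n) :=
  (fun η => η + σ) '' mulSet O lab σ

/-- A labeling of the border which is injective and ordered increasingly by degree. -/
def DegOrderedLabeling (O : Set (Term n)) (lab : Term n → ℕ) : Prop :=
  Set.InjOn lab (border O) ∧
    ∀ σ ∈ border O, ∀ σ' ∈ border O, lab σ < lab σ' → tdeg σ ≤ tdeg σ'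

/-- Iterated border closures: `∂⁰𝒪 := 𝒪`, and the `(k+1)`-st closure adds the border. -/
def borderClosure (O : Set (Term n)) : ℕ → Set (Term n)
  | 0 => O
  | k + 1 => borderClosure O k ∪ border (borderClosure O k)

/-- The index `ind_𝒪(τ)`: the least `k` with `τ ∈ ∂^k𝒪`. -/
noncomputable def ind (O : Set (Term n)) (τ : Term n) : ℕ :=
  sInf {k | τ ∈ borderClosure O k}

/-- Degree-`d` part of a set of terms. -/
def Od (O : Set (Term n)) (d : ℕ) : Set (Term n) := {τ | τ ∈ O ∧ tdeg τ = d}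

variable {K : Type*} [Field K]

/-- The index of a nonzero polynomial: the maximal index of a term of its support. -/
noncomputable def indP (O : Set (Term n)) (f : MvPolynomial (Fin (n + 1)) K) : ℕ :=
  f.support.sup (ind O)

/-- A homogeneous `∂𝒪`-prebasis: a family `g σ = σ - Σ_{τ ∈ 𝒪_{deg σ}} c_{στ} τ`. -/
def IsPrebasis (O : Set (Term n)) (g : Term n → MvPolynomial (Fin (n + 1)) K) : Prop :=
  ∀ σ ∈ border O, ∀ τ ∈ (monomial σ (1 : K) - g σ).support, τ ∈ O ∧ tdeg τ = tdeg σ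

/-- The set of border reductors `𝒯G = {η·g_σ : σ ∈ ∂𝒪, η ∈ 𝒯_σ}`. -/
def reductors (O : Set (Term n)) (lab : Term n → ℕ)
    (g : Term n → MvPolynomial (Fin (n + 1)) K) : Set (MvPolynomial (Fin (n + 1)) K) :=
  {p | ∃ σ ∈ border O, ∃ η ∈ mulSet O lab σ, p = monomial η (1 : K) * g σ}

/-- The degree-`d` border reductors `𝒯G_d = 𝒯G ∩ P_d`. -/
def reductorsDeg (O : Set (Term n)) (lab : Term n → ℕ)
    (g : Term n → MvPolynomial (Fin (n + 1)) K) (d : ℕ) :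
    Set (MvPolynomial (Fin (n + 1)) K) :=
  reductors O lab g ∩ {p | p.IsHomogeneous d}

/-- One step of the border reduction relation `→_G`. -/
def Step (O : Set (Term n)) (lab : Term n → ℕ)
    (g : Term n → MvPolynomial (Fin (n + 1)) K)
    (f h : MvPolynomial (Fin (n + 1)) K) : Prop :=
  ∃ σ ∈ border O, ∃ η ∈ mulSet O lab σ, η + σ ∈ f.support ∧
    h = f - f.coeff (η + σ) • (monomial η (1 : K) * g σ)

/-- The border reduction relation `→⁺_G` (finitely many, possibly zero, steps). -/
def Reduces (O : Set (Term n)) (lab : Term n → ℕ)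
    (g : Term n → MvPolynomial (Fin (n + 1)) K) :
    MvPolynomial (Fin (n + 1)) K → MvPolynomial (Fin (n + 1)) K → Prop :=
  Relation.ReflTransGen (Step O lab g)

/-- The `K`-vector space spanned by a set of terms. -/
noncomputable def spanTerms (K : Type*) [Field K] (S : Set (Term n)) :
    Submodule K (MvPolynomial (Fin (n + 1)) K) :=
  Submodule.span K ((fun τ => monomial τ (1 : K)) '' S)

/-- The ideal `(G)` generated by a `∂𝒪`-prebasis. -/
noncomputable def idealG (O : Set (Term n)) (g : Term n → MvPolynomial (Fin (n + 1)) K) :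
    Ideal (MvPolynomial (Fin (n + 1)) K) :=
  Ideal.span (g '' border O)

/-- The degree-`d` part `I_d` of an ideal, as a `K`-vector subspace. -/
noncomputable def degPart (I : Ideal (MvPolynomial (Fin (n + 1)) K)) (d : ℕ) :
    Submodule K (MvPolynomial (Fin (n + 1)) K) :=
  Submodule.restrictScalars K I ⊓ homogeneousSubmodule (Fin (n + 1)) K d

/-- Homogeneous ideal. -/
def IsHomogeneousIdeal (I : Ideal (MvPolynomial (Fin (n + 1)) K)) : Prop :=
  ∀ f ∈ I, ∀ d : ℕ, homogeneousComponent d f ∈ I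

/-- `G` is a homogeneous `∂𝒪`-basis of `J`: it is a prebasis contained in `J` and for every
`d` one has `P_d = J_d ⊕ ⟨𝒪_d⟩`, i.e. the residue classes of `𝒪_d` are a basis of `P_d/J_d`. -/
def IsBorderBasisOf (O : Set (Term n)) (g : Term n → MvPolynomial (Fin (n + 1)) K)
    (J : Ideal (MvPolynomial (Fin (n + 1)) K)) : Prop :=
  IsPrebasis O g ∧ (∀ σ ∈ border O, g σ ∈ J) ∧
    ∀ d : ℕ, degPart J d ⊔ spanTerms K (Od O d) = homogeneousSubmodule (Fin (n + 1)) K d ∧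
      Disjoint (degPart J d) (spanTerms K (Od O d))

/-- An `m`-lower representation of `f` by `𝒯G`: `f = Σ c_j • η_j·g_{σ_j}` with distinct
pairs `(η_j, σ_j)`, `η_j ∈ 𝒯_{σ_j}` and `ind(η_j σ_j) ≤ m`. -/
def HasLRep (O : Set (Term n)) (lab : Term n → ℕ)
    (g : Term n → MvPolynomial (Fin (n + 1)) K)
    (f : MvPolynomial (Fin (n + 1)) K) (m : ℕ) : Prop :=
  ∃ (s : Finset (Term n × Term n)) (c : Term n × Term n → K),
    (∀ p ∈ s, p.2 ∈ border O ∧ p.1 ∈ mulSet O lab p.2 ∧ ind O (p.1 + p.2) ≤ m) ∧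
    f = ∑ p ∈ s, c p • (monomial p.1 (1 : K) * g p.2)

/-- An `m`-lower representation of `f` by `𝒯G_d`. -/
def HasLRepDeg (O : Set (Term n)) (lab : Term n → ℕ)
    (g : Term n → MvPolynomial (Fin (n + 1)) K)
    (f : MvPolynomial (Fin (n + 1)) K) (m d : ℕ) : Prop :=
  ∃ (s : Finset (Term n × Term n)) (c : Term n × Term n → K),
    (∀ p ∈ s, p.2 ∈ border O ∧ p.1 ∈ mulSet O lab p.2 ∧ ind O (p.1 + p.2) ≤ m ∧
      (monomial p.1 (1 : K) * g p.2).IsHomogeneous d) ∧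
    f = ∑ p ∈ s, c p • (monomial p.1 (1 : K) * g p.2)

/-- The subtype of terms of `𝒪` of degree `d`. -/
abbrev OdSub (O : Set (Term n)) (d : ℕ) : Type _ := {τ : Term n // τ ∈ Od O d}

lemma tdeg_component_lt {d : ℕ} (m : Term n) (h : tdeg m = d) (i : Fin (n + 1)) :
    m i < d + 1 := by
  have : m i ≤ tdeg m :=
    Finset.single_le_sum (f := fun j => m j) (fun j _ => Nat.zero_le _) (Finset.mem_univ i)
  omega

instance (O : Set (Term n)) (d : ℕ) : Finite (OdSub O d) := by
  have hinj : Function.Injective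
      (fun τ : OdSub O d => fun i : Fin (n + 1) =>
        (⟨τ.1 i, tdeg_component_lt τ.1 τ.2.2 i⟩ : Fin (d + 1))) := by
    intro a b hab
    apply Subtype.ext
    apply Finsupp.ext
    intro i
    simpa using congrArg Fin.val (congrFun hab i)
  exact Finite.of_injective _ hinj

noncomputable instance (O : Set (Term n)) (d : ℕ) : Fintype (OdSub O d) :=
  Fintype.ofFinite _

open scoped Classical in
/-- The `r`-th `d`-graded formal multiplication matrix of a prebasis `G`,
with rows indexed by `𝒪_{d+1}` and columns by `𝒪_d`. -/
noncomputable def multMatrix (O : Set (Term n))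
    (g : Term n → MvPolynomial (Fin (n + 1)) K) (r : Fin (n + 1)) (d : ℕ) :
    Matrix (OdSub O (d + 1)) (OdSub O d) K :=
  Matrix.of fun τ' τ =>
    if τ.1 + Finsupp.single r 1 ∈ O then
      (if τ.1 + Finsupp.single r 1 = τ'.1 then 1 else 0)
    else (monomial (τ.1 + Finsupp.single r 1) (1 : K)
            - g (τ.1 + Finsupp.single r 1)).coeff τ'.1

/-- The minimum degree of a border term. -/
noncomputable def minDegBorder (O : Set (Term n)) : ℕ := sInf (tdeg '' border O)

/-- The `d`-th Macaulay transformation `a^{⟨d⟩}`, computed greedily. -/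
noncomputable def macaulay : ℕ → ℕ → ℕ
  | 0, _ => 0
  | d + 1, a =>
    if a = 0 then 0
    else
      Nat.choose (sSup {k | Nat.choose k (d + 1) ≤ a} + 1) (d + 2) +
        macaulay d (a - Nat.choose (sSup {k | Nat.choose k (d + 1) ≤ a}) (d + 1))

/-- An ideal is generated in degrees `≤ m` if it is generated by its homogeneous
elements of degree `≤ m`. -/
def GeneratedInDegLE (I : Ideal (MvPolynomial (Fin (n + 1)) K)) (m : ℕ) : Prop :=
  I = Ideal.span {f | f ∈ I ∧ ∃ d ≤ m, f.IsHomogeneous d}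

lemma tdeg_eq_degree (m : Term n) : tdeg m = Finsupp.degree m := by
  rw [tdeg, Finsupp.degree]
  exact (Finset.sum_subset (Finset.subset_univ _) (fun i _ hi => by
    simpa using Finsupp.notMem_support_iff.mp hi)).symm

lemma tdeg_add (a b : Term n) : tdeg (a + b) = tdeg a + tdeg b := by
  simp [tdeg, Finsupp.add_apply, Finset.sum_add_distrib]

lemma isHomog_of_tdeg {f : MvPolynomial (Fin (n + 1)) K} {d : ℕ}
    (h : ∀ m ∈ f.support, tdeg m = d) : f.IsHomogeneous d := by
  intro m hm
  rw [Finsupp.weight, Finsupp.linearCombination]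
  have := h m (by simpa [MvPolynomial.mem_support_iff] using hm)
  rw [tdeg_eq_degree, Finsupp.degree] at this
  have h' : ∑ i ∈ m.support, m i = d := this
  simpa [Finsupp.sum] using h'

lemma tdeg_of_isHomog {f : MvPolynomial (Fin (n + 1)) K} {d : ℕ}
    (h : f.IsHomogeneous d) {m : Term n} (hm : m ∈ f.support) : tdeg m = d := by
  have := h (MvPolynomial.mem_support_iff.mp hm)
  rw [tdeg_eq_degree, Finsupp.degree]
  exact (by simpa [Finsupp.weight, Finsupp.linearCombination, Finsupp.sum] using this : ∑ i ∈ m.support, m i = d)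

lemma zero_mem_of_orderIdeal {O : Set (Term n)} (hO : IsOrderIdeal O) : (0 : Term n) ∈ O := by
  obtain ⟨τ, hτ⟩ := hO.1
  exact hO.2 τ hτ 0 (by intro i; simp)

lemma borderClosure_mono {O : Set (Term n)} {k l : ℕ} (h : k ≤ l) :
    borderClosure O k ⊆ borderClosure O l := by
  induction l with
  | zero => simpa [Nat.le_zero.mp h]
  | succ l ih =>
    rcases Nat.lt_or_ge k (l + 1) with h' | h'
    · exact (ih (Nat.lt_succ_iff.mp h')).trans Set.subset_union_left
    · have : k = l + 1 := le_antisymm h h'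
      subst this; exact subset_rfl

lemma single_add_mem_closure {O : Set (Term n)} {τ : Term n} {k : ℕ} (r : Fin (n + 1))
    (h : τ ∈ borderClosure O k) : τ + Finsupp.single r 1 ∈ borderClosure O (k + 1) := by
  by_cases h' : τ + Finsupp.single r 1 ∈ borderClosure O k
  · exact Set.subset_union_left h'
  · exact Set.subset_union_right ⟨h', r, τ, h, rfl⟩

lemma add_mem_closure {O : Set (Term n)} {τ : Term n} (hτ : τ ∈ O) :
    ∀ k, ∀ η : Term n, tdeg η = k → η + τ ∈ borderClosure O k := by
  intro k
  induction k with
  | zero =>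
    intro η hη
    have : η = 0 := by
      ext i
      have : η i ≤ tdeg η := Finset.single_le_sum (f := fun j => η j)
        (fun j _ => Nat.zero_le _) (Finset.mem_univ i)
      simp only [Finsupp.coe_zero, Pi.zero_apply]
      omega
    simpa [this, borderClosure] using hτ
  | succ k ih =>
    intro η hη
    have hne : η ≠ 0 := by
      intro h0; rw [h0] at hη; simp [tdeg] at hη
    obtain ⟨i, hi⟩ : ∃ i, η i ≠ 0 := by
      by_contra hc
      push_neg at hc
      exact hne (Finsupp.ext fun i => hc i)
    set η' : Term n := η - Finsupp.single i 1 with hη'def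
    have hsplit : η = η' + Finsupp.single i 1 := by
      ext j
      by_cases hji : j = i
      · subst hji
        simp [hη'def, Finsupp.sub_apply, Finsupp.single_apply]
        omega
      · simp [hη'def, Finsupp.sub_apply, Finsupp.single_apply, Ne.symm hji]
    have htd : tdeg η' = k := by
      have : tdeg η = tdeg η' + 1 := by
        rw [hsplit, tdeg_add]
        simp [tdeg, Finsupp.single_apply]
      omega
    have := single_add_mem_closure (O := O) i (ih η' htd)
    rw [hsplit, add_right_comm]
    exact this

lemma exists_border_decomp {O : Set (Term n)} :
    ∀ k, ∀ τ : Term n, τ ∈ borderClosure O k → τ ∉ O →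
      ∃ σ ∈ border O, ∃ η : Term n, τ = η + σ ∧ tdeg η + 1 ≤ k := by
  intro k
  induction k with
  | zero => intro τ h h'; exact absurd h h'
  | succ k ih =>
    intro τ h hτO
    rcases h with h | h
    · obtain ⟨σ, hσ, η, hd, hb⟩ := ih τ h hτO
      exact ⟨σ, hσ, η, hd, hb.trans (Nat.le_succ k)⟩
    · obtain ⟨hτk, r, ρ, hρ, rfl⟩ := h
      by_cases hρO : ρ ∈ O
      · refine ⟨ρ + Finsupp.single r 1, ⟨hτO, r, ρ, hρO, rfl⟩, 0, by simp, ?_⟩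
        simp [tdeg]
      · obtain ⟨σ, hσ, η, hd, hb⟩ := ih ρ hρ hρO
        refine ⟨σ, hσ, η + Finsupp.single r 1, ?_, ?_⟩
        · rw [hd, add_right_comm]
        · rw [tdeg_add]
          have : tdeg (Finsupp.single r (1 : ℕ)) = 1 := by simp [tdeg, Finsupp.single_apply]
          omega

lemma g_homog {O : Set (Term n)} {g : Term n → MvPolynomial (Fin (n + 1)) K}
    (hg : IsPrebasis O g) {σ : Term n} (hσ : σ ∈ border O) :
    (g σ).IsHomogeneous (tdeg σ) := by
  have h1 : (monomial σ (1 : K)).IsHomogeneous (tdeg σ) :=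
    isHomogeneous_monomial _ (tdeg_eq_degree σ).symm
  have h2 : (monomial σ (1 : K) - g σ).IsHomogeneous (tdeg σ) :=
    isHomog_of_tdeg (fun m hm => (hg σ hσ m hm).2)
  have : g σ = monomial σ (1 : K) - (monomial σ (1 : K) - g σ) := by ring
  rw [this]
  exact h1.sub h2

lemma monomial_mem_sup {O : Set (Term n)} (hO : IsOrderIdeal O)
    {g : Term n → MvPolynomial (Fin (n + 1)) K} (hg : IsPrebasis O g) :
    ∀ k, ∀ τ : Term n, τ ∈ borderClosure O k →
      monomial τ (1 : K) ∈ degPart (idealG O g) (tdeg τ) ⊔ spanTerms K (Od O (tdeg τ)) := by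
  intro k
  induction k with
  | zero =>
    intro τ hτ
    exact Submodule.mem_sup_right (Submodule.subset_span ⟨τ, ⟨hτ, rfl⟩, rfl⟩)
  | succ k ih =>
    intro τ hτ
    by_cases hτO : τ ∈ O
    · exact Submodule.mem_sup_right (Submodule.subset_span ⟨τ, ⟨hτO, rfl⟩, rfl⟩)
    obtain ⟨σ, hσ, η, rfl, hb⟩ := exists_border_decomp (k + 1) τ hτ hτO
    have hsplit : monomial (η + σ) (1 : K) =
        monomial η (1 : K) * g σ + monomial η (1 : K) * (monomial σ (1 : K) - g σ) := by
      rw [mul_sub]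
      rw [MvPolynomial.monomial_mul]
      ring_nf
    rw [hsplit]
    apply Submodule.add_mem
    · apply Submodule.mem_sup_left
      constructor
      · exact Ideal.mul_mem_left _ _ (Ideal.subset_span ⟨σ, hσ, rfl⟩)
      · rw [SetLike.mem_coe, mem_homogeneousSubmodule, tdeg_add]
        exact (isHomogeneous_monomial _ (tdeg_eq_degree η).symm).mul (g_homog hg hσ)
    · set h := monomial σ (1 : K) - g σ with hh
      have hrw : monomial η (1 : K) * h =
          ∑ τ' ∈ h.support, h.coeff τ' • monomial (η + τ') (1 : K) := by
        conv_lhs => rw [h.as_sum]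
        rw [Finset.mul_sum]
        refine Finset.sum_congr rfl fun τ' _ => ?_
        rw [MvPolynomial.monomial_mul, MvPolynomial.smul_monomial]
        simp
      rw [hrw]
      apply Submodule.sum_mem
      intro τ' hτ'
      apply Submodule.smul_mem
      have hτ'O : τ' ∈ O := (hg σ hσ τ' hτ').1
      have htd : tdeg τ' = tdeg σ := (hg σ hσ τ' hτ').2
      have hmem : η + τ' ∈ borderClosure O k :=
        borderClosure_mono (by omega) (add_mem_closure hτ'O (tdeg η) η rfl)
      have := ih (η + τ') hmem
      rwa [tdeg_add, htd, ← tdeg_add] at this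

/-- **A prebasis generates modulo `𝒪`.** For every `d ≥ 0`, the residue classes of the
terms of `𝒪_d` generate `P_d/(G)_d`; equivalently `P_d = (G)_d + ⟨𝒪_d⟩`. -/
theorem prebasis_generates (O : Set (Term n)) (hO : IsOrderIdeal O)
    (g : Term n → MvPolynomial (Fin (n + 1)) K) (hg : IsPrebasis O g) :
    ∀ d : ℕ, degPart (idealG O g) d ⊔ spanTerms K (Od O d) =
      homogeneousSubmodule (Fin (n + 1)) K d := by
  intro d
  apply le_antisymm
  · apply sup_le
    · exact inf_le_right
    · rw [spanTerms, Submodule.span_le]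
      rintro _ ⟨τ, ⟨_, hτd⟩, rfl⟩
      rw [SetLike.mem_coe, mem_homogeneousSubmodule]
      exact isHomogeneous_monomial _ (by rw [← tdeg_eq_degree, hτd])
  · intro f hf
    rw [mem_homogeneousSubmodule] at hf
    rw [f.as_sum]
    apply Submodule.sum_mem
    intro m hm
    have htd : tdeg m = d := tdeg_of_isHomog hf hm
    have : (monomial m (f.coeff m)) = f.coeff m • monomial m (1 : K) := by
      rw [MvPolynomial.smul_monomial]; simp
    rw [this]
    apply Submodule.smul_mem
    have hmem : m ∈ borderClosure O (tdeg m) := by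
      have := add_mem_closure (zero_mem_of_orderIdeal hO) (tdeg m) m rfl
      simpa using this
    have := monomial_mem_sup hO hg (tdeg m) m hmem
    rwa [htd] at this

end Border
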